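/- arXiv:1905.06555 — 3 statements merged into one kernel-verified Lean document; each statement's English description precedes it below -/
import Mathlib

section
/- For fixed μ ∈ ℂ and integer 0 ≤ m ≤ δ−1, the squared L² norm ∫₀^{τ₂}∫₀^{δ} e^{−2π(z₂+μ₂)²/τ₂} |θ_m(z,μ)|² dz₁ dz₂ equals √(τ₂/2) · δ · e^{2πm²τ₂/δ²}; in particular it is independent of μ. -/
open Complex Real MeasureTheory Set intervalIntegral

/-- The `μ`-translated theta functions `θ_m(z,μ)`. -/
noncomputable def thetaM2 (τ : ℂ) (δ : ℕ) (m : ℤ) (z μ : ℂ) : ℂ :=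
  ∑' k : ℤ, Complex.exp (π * Complex.I * (k : ℂ) ^ 2 * τ) *
    Complex.exp (2 * π * Complex.I * τ * ((m : ℂ) / (δ : ℂ)) * (k : ℂ)) *
    Complex.exp (2 * π * Complex.I * (((k : ℂ) * (δ : ℂ) + (m : ℂ)) / (δ : ℂ)) * (z + μ))

noncomputable def wA (τ μ : ℂ) (r z₂ : ℝ) (k : ℤ) : ℂ :=
  π * Complex.I * (k : ℂ) ^ 2 * τ + 2 * π * Complex.I * τ * (r : ℂ) * (k : ℂ) +
    2 * π * Complex.I * ((k : ℂ) + (r : ℂ)) * ((z₂ : ℂ) * Complex.I + μ)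

lemma wA_re (τ μ : ℂ) (r z₂ : ℝ) (k : ℤ) :
    (wA τ μ r z₂ k).re =
      -π * τ.im * k ^ 2 - 2 * π * τ.im * r * k - 2 * π * (k + r) * (z₂ + μ.im) := by
  simp [wA, Complex.mul_re, Complex.mul_im, Complex.add_re, Complex.add_im, pow_two]
  ring

lemma theta_eq (τ : ℂ) (δ : ℕ) (hδ : (δ : ℂ) ≠ 0) (μ : ℂ) (m : ℤ) {r : ℝ}
    (hr : (r : ℂ) = (m : ℂ) / (δ : ℂ)) (z₁ z₂ : ℝ) :
    thetaM2 τ δ m ((z₁ : ℂ) + (z₂ : ℂ) * Complex.I) μ =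
      ∑' k : ℤ, Complex.exp (wA τ μ r z₂ k + 2 * π * Complex.I * ((k : ℂ) + (r : ℂ)) * (z₁ : ℂ)) := by
  unfold thetaM2
  refine tsum_congr fun k => ?_
  rw [← Complex.exp_add, ← Complex.exp_add]
  congr 1
  have h2 : ((k : ℂ) * (δ : ℂ) + (m : ℂ)) / (δ : ℂ) = (k : ℂ) + (r : ℂ) := by
    rw [hr]; field_simp
  rw [h2, hr, wA, ← hr]
  ring

lemma norm_term (τ μ : ℂ) (r z₂ : ℝ) (k : ℤ) (z₁ : ℝ) :
    ‖Complex.exp (wA τ μ r z₂ k + 2 * π * Complex.I * ((k : ℂ) + (r : ℂ)) * (z₁ : ℂ))‖ =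
      Real.exp ((wA τ μ r z₂ k).re) := by
  rw [Complex.norm_exp]
  congr 1
  simp [Complex.add_re, Complex.mul_re, Complex.mul_im]

lemma summable_exp_quad {T : ℝ} (hT : 0 < T) (b c : ℝ) :
    Summable fun k : ℤ => Real.exp (-π * T * k ^ 2 + b * k + c) := by
  have h := summable_pow_mul_jacobiTheta₂_term_bound (|b| / (2 * π)) hT 0
  have h2 := h.mul_left (Real.exp c)
  apply h2.of_nonneg_of_le (fun k => (Real.exp_pos _).le)
  intro k
  simp only [pow_zero, one_mul]
  rw [← Real.exp_add, Real.exp_le_exp]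
  have h3 : -π * (T * (k : ℝ) ^ 2 - 2 * (|b| / (2 * π)) * |(k : ℝ)|) =
      -π * T * (k : ℝ) ^ 2 + |b| * |(k : ℝ)| := by
    field_simp
    ring
  have h4 : b * (k : ℝ) ≤ |b| * |(k : ℝ)| := by
    calc b * (k : ℝ) ≤ |b * (k : ℝ)| := le_abs_self _
    _ = |b| * |(k : ℝ)| := abs_mul _ _
  rw [Int.cast_abs, h3]
  linarith

lemma summable_M (τ : ℂ) (hτ : 0 < τ.im) (μ : ℂ) (r z₂ : ℝ) :
    Summable fun k : ℤ => Real.exp ((wA τ μ r z₂ k).re) := by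
  simp_rw [wA_re]
  have : ∀ k : ℤ, -π * τ.im * (k:ℝ) ^ 2 - 2 * π * τ.im * r * k - 2 * π * ((k:ℝ) + r) * (z₂ + μ.im)
      = -π * τ.im * (k:ℝ) ^ 2 + (-2 * π * τ.im * r - 2 * π * (z₂ + μ.im)) * k +
        (-2 * π * r * (z₂ + μ.im)) := fun k => by ring
  simp_rw [this]
  exact summable_exp_quad hτ _ _

lemma integral_exp_int (δ : ℕ) (n : ℤ) :
    (∫ z₁ in (0:ℝ)..(δ:ℝ), Complex.exp (2 * π * Complex.I * (n : ℂ) * (z₁ : ℂ))) =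
      if n = 0 then (δ : ℂ) else 0 := by
  split_ifs with h
  · simp [h]
  · have hc : (2 * (π : ℂ) * Complex.I * (n : ℂ)) ≠ 0 := by
      simp [Real.pi_ne_zero, Complex.I_ne_zero, h]
    have key := integral_exp_mul_complex (a := (0:ℝ)) (b := (δ:ℝ)) hc
    simp only [mul_comm] at key
    have h1 : (∫ z₁ in (0:ℝ)..(δ:ℝ), Complex.exp (2 * π * Complex.I * (n : ℂ) * (z₁ : ℂ))) =
        ∫ z₁ in (0:ℝ)..(δ:ℝ), Complex.exp ((2 * (π:ℂ) * Complex.I * (n : ℂ)) * (z₁ : ℂ)) := by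
      refine intervalIntegral.integral_congr fun x _ => ?_
      norm_num
    rw [h1, integral_exp_mul_complex hc]
    have h2 : Complex.exp (2 * (π:ℂ) * Complex.I * (n : ℂ) * (δ : ℂ)) = 1 := by
      have := Complex.exp_int_mul_two_pi_mul_I (n * δ)
      rw [← this]
      congr 1
      push_cast
      ring
    rw [show ((δ:ℝ):ℂ) = (δ:ℂ) by norm_num, h2]
    simp

lemma conj_term (τ μ : ℂ) (r z₂ : ℝ) (j : ℤ) (z₁ : ℝ) :
    (starRingEnd ℂ) (Complex.exp (wA τ μ r z₂ j + 2 * π * Complex.I * ((j:ℂ)+(r:ℂ)) * (z₁:ℂ))) =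
      Complex.exp ((starRingEnd ℂ) (wA τ μ r z₂ j) - 2 * π * Complex.I * ((j:ℂ)+(r:ℂ)) * (z₁:ℂ)) := by
  rw [← Complex.exp_conj]
  congr 1
  simp only [map_add, map_mul, Complex.conj_I, Complex.conj_ofReal, map_intCast,
    map_ofNat]
  ring

lemma integral_cross (τ μ : ℂ) (δ : ℕ) (r z₂ : ℝ) (k j : ℤ) :
    (∫ z₁ in (0:ℝ)..(δ:ℝ),
      Complex.exp (wA τ μ r z₂ k + 2*π*Complex.I*((k:ℂ)+(r:ℂ))*(z₁:ℂ)) *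
        (starRingEnd ℂ) (Complex.exp (wA τ μ r z₂ j + 2*π*Complex.I*((j:ℂ)+(r:ℂ))*(z₁:ℂ)))) =
      if k = j then (δ:ℂ) * Real.exp (2 * (wA τ μ r z₂ k).re) else 0 := by
  have hpt : ∀ z₁ : ℝ,
      Complex.exp (wA τ μ r z₂ k + 2*π*Complex.I*((k:ℂ)+(r:ℂ))*(z₁:ℂ)) *
        (starRingEnd ℂ) (Complex.exp (wA τ μ r z₂ j + 2*π*Complex.I*((j:ℂ)+(r:ℂ))*(z₁:ℂ))) =
      Complex.exp (wA τ μ r z₂ k + (starRingEnd ℂ) (wA τ μ r z₂ j)) *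
        Complex.exp (2*π*Complex.I*(((k - j : ℤ):ℂ))*(z₁:ℂ)) := by
    intro z₁
    rw [conj_term, ← Complex.exp_add, ← Complex.exp_add]
    congr 1
    push_cast
    ring
  have : (∫ z₁ in (0:ℝ)..(δ:ℝ),
      Complex.exp (wA τ μ r z₂ k + 2*π*Complex.I*((k:ℂ)+(r:ℂ))*(z₁:ℂ)) *
        (starRingEnd ℂ) (Complex.exp (wA τ μ r z₂ j + 2*π*Complex.I*((j:ℂ)+(r:ℂ))*(z₁:ℂ)))) =
      Complex.exp (wA τ μ r z₂ k + (starRingEnd ℂ) (wA τ μ r z₂ j)) *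
        ∫ z₁ in (0:ℝ)..(δ:ℝ), Complex.exp (2*π*Complex.I*(((k - j : ℤ):ℂ))*(z₁:ℂ)) := by
    rw [← intervalIntegral.integral_const_mul]
    exact intervalIntegral.integral_congr fun x _ => hpt x
  rw [this, integral_exp_int δ (k - j)]
  by_cases h : k = j
  · subst h
    simp only [sub_self, if_pos rfl, if_pos rfl]
    rw [Complex.add_conj, Complex.ofReal_mul, Complex.ofReal_ofNat]
    rw [show ((2:ℂ) * ((wA τ μ r z₂ k).re : ℂ)) = (((2 * (wA τ μ r z₂ k).re : ℝ)) : ℂ) by push_cast; ring]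
    rw [Complex.ofReal_exp]
    simp [mul_comm]
  · simp [h, sub_eq_zero]

lemma innerA (τ : ℂ) (hτ : 0 < τ.im) (δ : ℕ) (hδ : 1 ≤ δ) (μ : ℂ) (m : ℤ) {r : ℝ}
    (hr : (r : ℂ) = (m : ℂ) / (δ : ℂ)) (z₂ : ℝ) :
    (∫ z₁ in (0:ℝ)..(δ:ℝ), ‖thetaM2 τ δ m ((z₁:ℂ) + (z₂:ℂ) * Complex.I) μ‖^2) =
      δ * ∑' k : ℤ, Real.exp (2 * (wA τ μ r z₂ k).re) := by
  have hδ0 : (0:ℝ) ≤ (δ:ℝ) := Nat.cast_nonneg δ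
  set F : ℤ → ℝ → ℂ := fun k z₁ =>
    Complex.exp (wA τ μ r z₂ k + 2 * π * Complex.I * ((k:ℂ)+(r:ℂ)) * (z₁:ℂ)) with hF
  set M : ℤ → ℝ := fun k => Real.exp ((wA τ μ r z₂ k).re) with hMdef
  have hM : Summable M := summable_M τ hτ μ r z₂
  have hFnorm : ∀ k z₁, ‖F k z₁‖ = M k := fun k z₁ => norm_term τ μ r z₂ k z₁
  -- the complex key identity
  have key : (∫ z₁ in (0:ℝ)..(δ:ℝ),
      thetaM2 τ δ m ((z₁:ℂ) + (z₂:ℂ) * Complex.I) μ *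
        (starRingEnd ℂ) (thetaM2 τ δ m ((z₁:ℂ) + (z₂:ℂ) * Complex.I) μ)) =
      (((δ:ℝ) * ∑' k : ℤ, Real.exp (2 * (wA τ μ r z₂ k).re) : ℝ) : ℂ) := by
    have hpt : ∀ z₁ : ℝ,
        thetaM2 τ δ m ((z₁:ℂ) + (z₂:ℂ) * Complex.I) μ *
          (starRingEnd ℂ) (thetaM2 τ δ m ((z₁:ℂ) + (z₂:ℂ) * Complex.I) μ) =
        ∑' p : ℤ × ℤ, F p.1 z₁ * (starRingEnd ℂ) (F p.2 z₁) := by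
      intro z₁
      rw [theta_eq τ δ (by exact_mod_cast Nat.pos_of_ne_zero (by omega) |>.ne') μ m hr z₁ z₂]
      have hconj : (starRingEnd ℂ) (∑' k : ℤ, F k z₁) = ∑' k : ℤ, (starRingEnd ℂ) (F k z₁) := by
        exact tsum_star
      rw [hconj]
      refine tsum_mul_tsum_of_summable_norm ?_ ?_
      · exact hM.congr fun k => (hFnorm k z₁).symm
      · simp only [RCLike.norm_conj]
        exact hM.congr fun k => (hFnorm k z₁).symm
    simp_rw [hpt]
    rw [intervalIntegral.integral_of_le hδ0]
    rw [← MeasureTheory.integral_tsum_of_summable_integral_norm]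
    · -- evaluate each set integral
      have hev : ∀ p : ℤ × ℤ, (∫ z₁ in Ioc (0:ℝ) (δ:ℝ), F p.1 z₁ * (starRingEnd ℂ) (F p.2 z₁)) =
          if p.1 = p.2 then (δ:ℂ) * Real.exp (2 * (wA τ μ r z₂ p.1).re) else 0 := by
        intro p
        rw [← intervalIntegral.integral_of_le hδ0]
        exact integral_cross τ μ δ r z₂ p.1 p.2
      simp_rw [hev]
      have hdiag : (∑' p : ℤ × ℤ,
          if p.1 = p.2 then (δ:ℂ) * Real.exp (2 * (wA τ μ r z₂ p.1).re) else 0) =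
          ∑' k : ℤ, (δ:ℂ) * Real.exp (2 * (wA τ μ r z₂ k).re) := by
        rw [← Function.Injective.tsum_eq (g := fun k : ℤ => (k, k))
          (fun a b hab => (Prod.mk.injEq _ _ _ _ ▸ hab).1)]
        · simp
        · intro p hp
          by_contra hpr
          apply hp
          have : p.1 ≠ p.2 := by
            intro h
            exact hpr ⟨p.1, by ext <;> simp [h]⟩
          simp [this]
      rw [hdiag, tsum_mul_left]
      rw [Complex.ofReal_mul, ofReal_tsum]
      norm_cast
    · intro p
      apply Continuous.integrableOn_Ioc
      exact (Complex.continuous_exp.comp (continuous_const.add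
        (continuous_const.mul Complex.continuous_ofReal))).mul
        (continuous_star.comp (Complex.continuous_exp.comp (continuous_const.add
          (continuous_const.mul Complex.continuous_ofReal))))
    · have hnorm : ∀ p : ℤ × ℤ, (∫ z₁ in Ioc (0:ℝ) (δ:ℝ), ‖F p.1 z₁ * (starRingEnd ℂ) (F p.2 z₁)‖) =
          (δ:ℝ) * (M p.1 * M p.2) := by
        intro p
        have : ∀ z₁ : ℝ, ‖F p.1 z₁ * (starRingEnd ℂ) (F p.2 z₁)‖ = M p.1 * M p.2 := by
          intro z₁
          rw [norm_mul, RCLike.norm_conj, hFnorm, hFnorm]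
        simp_rw [this]
        rw [MeasureTheory.setIntegral_const, Real.volume_real_Ioc_of_le hδ0, smul_eq_mul, sub_zero]
      simp_rw [hnorm]
      exact (hM.mul_of_nonneg hM (fun k => (Real.exp_pos _).le)
        (fun k => (Real.exp_pos _).le)).mul_left _
  -- pass to the real statement
  have habs : ∀ z₁ : ℝ, (‖thetaM2 τ δ m ((z₁:ℂ) + (z₂:ℂ) * Complex.I) μ‖^2 : ℂ) =
      thetaM2 τ δ m ((z₁:ℂ) + (z₂:ℂ) * Complex.I) μ *
        (starRingEnd ℂ) (thetaM2 τ δ m ((z₁:ℂ) + (z₂:ℂ) * Complex.I) μ) := by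
    intro z₁
    rw [Complex.mul_conj]
    norm_cast
    exact Complex.sq_norm _
  apply Complex.ofReal_injective
  rw [← intervalIntegral.integral_ofReal]
  calc (∫ z₁ in (0:ℝ)..(δ:ℝ),
        ((‖thetaM2 τ δ m ((z₁:ℂ) + (z₂:ℂ) * Complex.I) μ‖ ^ 2 : ℝ) : ℂ))
      = ∫ z₁ in (0:ℝ)..(δ:ℝ),
        thetaM2 τ δ m ((z₁:ℂ) + (z₂:ℂ) * Complex.I) μ *
          (starRingEnd ℂ) (thetaM2 τ δ m ((z₁:ℂ) + (z₂:ℂ) * Complex.I) μ) := by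
        refine intervalIntegral.integral_congr fun x _ => ?_
        exact_mod_cast habs x
    _ = _ := by rw [key]

lemma hasSum_gauss {T : ℝ} (hT : 0 < T) (a : ℝ) :
    HasSum (fun k : ℤ => ∫ z₂ in (0:ℝ)..T, Real.exp (-(2*π/T) * (z₂ + (a + T*k))^2))
      (Real.sqrt (T/2)) := by
  have hb : 0 < 2*π/T := by positivity
  have hint : Integrable (fun u : ℝ => Real.exp (-(2*π/T) * u^2)) := integrable_exp_neg_mul_sq hb
  have h1 : ∀ k : ℤ, (∫ z₂ in (0:ℝ)..T, Real.exp (-(2*π/T) * (z₂ + (a + T*k))^2)) =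
      ∫ u in Ioc (a + k • T) (a + (k+1) • T), Real.exp (-(2*π/T) * u^2) := by
    intro k
    rw [intervalIntegral.integral_comp_add_right (fun u => Real.exp (-(2*π/T)*u^2)) (a + T*k)]
    rw [intervalIntegral.integral_of_le (by linarith)]
    have hset : Ioc ((0:ℝ) + (a + T*k)) (T + (a + T*k)) = Ioc (a + k • T) (a + (k+1) • T) := by
      rw [zsmul_eq_mul, zsmul_eq_mul]
      push_cast
      congr 1 <;> ring
    rw [hset]
  simp_rw [h1]
  have h2 := MeasureTheory.hasSum_integral_iUnion
    (s := fun k : ℤ => Ioc (a + k • T) (a + (k+1) • T))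
    (f := fun u : ℝ => Real.exp (-(2*π/T) * u^2))
    (fun k => measurableSet_Ioc) (pairwise_disjoint_Ioc_add_zsmul a T)
    (hint.integrableOn)
  rw [iUnion_Ioc_add_zsmul hT a, MeasureTheory.setIntegral_univ, integral_gaussian] at h2
  have h3 : Real.sqrt (π / (2*π/T)) = Real.sqrt (T/2) := by
    congr 1
    field_simp
  rwa [h3] at h2

/-- The squared `L²` norm of `θ_m(·,μ)` with weight `e^{−2π(z₂+μ₂)²/τ₂}` over the
fundamental domain `[0,δ]×[0,τ₂]` equals `√(τ₂/2)·δ·e^{2πm²τ₂/δ²}`; in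
particular it is independent of `μ`. -/
theorem thetaM2_norm_sq (τ : ℂ) (hτ : 0 < τ.im) (δ : ℕ) (hδ : 1 ≤ δ) (μ : ℂ)
    (m : ℤ) (hm0 : 0 ≤ m) (hm : m ≤ (δ : ℤ) - 1) :
    (∫ z₂ in (0:ℝ)..τ.im, ∫ z₁ in (0:ℝ)..(δ:ℝ),
      Real.exp (-2 * π * (z₂ + μ.im) ^ 2 / τ.im) *
        ‖thetaM2 τ δ m (z₁ + z₂ * Complex.I) μ‖ ^ 2) =
      Real.sqrt (τ.im / 2) * δ * Real.exp (2 * π * (m : ℝ) ^ 2 * τ.im / (δ : ℝ) ^ 2) := by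
  set T : ℝ := τ.im with hTdef
  have hT : 0 < T := hτ
  have hTne : T ≠ 0 := hT.ne'
  have hδ0 : (0:ℝ) < (δ:ℝ) := by exact_mod_cast hδ
  set r : ℝ := (m:ℝ)/(δ:ℝ) with hrdef
  have hr : (r:ℂ) = (m:ℂ)/(δ:ℂ) := by push_cast [hrdef]; ring
  set a : ℝ := μ.im + T*r with hadef
  set C : ℝ := (δ:ℝ) * Real.exp (2*π*T*r^2) with hCdef
  have hstep1 : ∀ z₂ : ℝ,
      (∫ z₁ in (0:ℝ)..(δ:ℝ), Real.exp (-2 * π * (z₂ + μ.im) ^ 2 / T) *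
        ‖thetaM2 τ δ m ((z₁:ℂ) + (z₂:ℂ) * Complex.I) μ‖ ^ 2) =
      ∑' k : ℤ, C * Real.exp (-(2*π/T) * (z₂ + (a + T*k))^2) := by
    intro z₂
    rw [intervalIntegral.integral_const_mul, innerA τ hτ δ hδ μ m hr z₂]
    rw [show Real.exp (-2*π*(z₂+μ.im)^2/T) * ((δ:ℝ) * ∑' k : ℤ, Real.exp (2*(wA τ μ r z₂ k).re))
        = ∑' k : ℤ, (Real.exp (-2*π*(z₂+μ.im)^2/T) * (δ:ℝ)) * Real.exp (2*(wA τ μ r z₂ k).re) from by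
      rw [tsum_mul_left]; ring]
    refine tsum_congr fun k => ?_
    rw [wA_re, hCdef]
    rw [show (Real.exp (-2*π*(z₂+μ.im)^2/T) * (δ:ℝ)) *
        Real.exp (2*(-π * T * k ^ 2 - 2 * π * T * r * k - 2 * π * (k + r) * (z₂ + μ.im)))
        = (δ:ℝ) * Real.exp (-2*π*(z₂+μ.im)^2/T +
          2*(-π * T * k ^ 2 - 2 * π * T * r * k - 2 * π * (k + r) * (z₂ + μ.im))) from by
      rw [Real.exp_add]; ring]
    rw [show ((δ:ℝ) * Real.exp (2*π*T*r^2)) * Real.exp (-(2*π/T) * (z₂ + (a + T*k))^2)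
        = (δ:ℝ) * Real.exp (2*π*T*r^2 + (-(2*π/T) * (z₂ + (a + T*k))^2)) from by
      rw [Real.exp_add]; ring]
    congr 1
    rw [hadef]
    field_simp
    ring
  have hG := hasSum_gauss hT a
  calc (∫ z₂ in (0:ℝ)..T, ∫ z₁ in (0:ℝ)..(δ:ℝ),
        Real.exp (-2 * π * (z₂ + μ.im) ^ 2 / T) *
          ‖thetaM2 τ δ m ((z₁:ℂ) + (z₂:ℂ) * Complex.I) μ‖ ^ 2)
      = ∫ z₂ in (0:ℝ)..T, ∑' k : ℤ, C * Real.exp (-(2*π/T) * (z₂ + (a + T*k))^2) := by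
        exact intervalIntegral.integral_congr fun z₂ _ => hstep1 z₂
    _ = ∑' k : ℤ, ∫ z₂ in Ioc (0:ℝ) T, C * Real.exp (-(2*π/T) * (z₂ + (a + T*k))^2) := by
        rw [intervalIntegral.integral_of_le hT.le]
        rw [← MeasureTheory.integral_tsum_of_summable_integral_norm]
        · intro k
          apply Continuous.integrableOn_Ioc
          exact continuous_const.mul (Real.continuous_exp.comp (by continuity))
        · have hnn : ∀ (k : ℤ) (z₂ : ℝ), ‖C * Real.exp (-(2*π/T) * (z₂ + (a + T*k))^2)‖
              = C * Real.exp (-(2*π/T) * (z₂ + (a + T*k))^2) := by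
            intro k z₂
            rw [Real.norm_of_nonneg]
            positivity
          simp_rw [hnn]
          have : ∀ k : ℤ, (∫ z₂ in Ioc (0:ℝ) T, C * Real.exp (-(2*π/T) * (z₂ + (a + T*k))^2))
              = C * ∫ z₂ in (0:ℝ)..T, Real.exp (-(2*π/T) * (z₂ + (a + T*k))^2) := by
            intro k
            rw [intervalIntegral.integral_of_le hT.le, ← MeasureTheory.integral_const_mul]
          simp_rw [this]
          exact hG.summable.mul_left C
    _ = C * Real.sqrt (T/2) := by
        have : ∀ k : ℤ, (∫ z₂ in Ioc (0:ℝ) T, C * Real.exp (-(2*π/T) * (z₂ + (a + T*k))^2))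
            = C * ∫ z₂ in (0:ℝ)..T, Real.exp (-(2*π/T) * (z₂ + (a + T*k))^2) := by
          intro k
          rw [intervalIntegral.integral_of_le hT.le, ← MeasureTheory.integral_const_mul]
        simp_rw [this]
        exact (hG.mul_left C).tsum_eq
    _ = Real.sqrt (T / 2) * δ * Real.exp (2 * π * (m : ℝ) ^ 2 * T / (δ : ℝ) ^ 2) := by
        rw [hCdef]
        have : 2*π*T*r^2 = 2 * π * (m : ℝ) ^ 2 * T / (δ : ℝ) ^ 2 := by
          rw [hrdef]
          field_simp
        rw [this]
        ring
end

section
/- For any μ ∈ ℂ, the functions θ_m(·, μ), m = 0, …, δ−1, are linearly independent over ℂ as functions on ℂ. -/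
open Complex Real MeasureTheory

noncomputable def thetaC (τ : ℂ) (δ : ℕ) (μ : ℂ) (m k : ℤ) : ℂ :=
  jacobiTheta₂_term k (μ + τ * ((m:ℂ)/(δ:ℂ))) τ *
    Complex.exp (2 * π * Complex.I * ((m:ℂ)/(δ:ℂ)) * μ)

noncomputable def thetaF (τ : ℂ) (δ : ℕ) (μ : ℂ) (m m' k : ℤ) (x : ℝ) : ℂ :=
  thetaC τ δ μ m k *
    Complex.exp (2 * π * Complex.I * (((k * δ + m - m' : ℤ) : ℂ)/(δ:ℂ)) * x)

lemma integral_exp_aux {δ : ℕ} (hδ : 0 < δ) (a : ℤ) :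
    ∫ x in Set.Ioc (0:ℝ) (δ:ℝ), Complex.exp (2 * π * Complex.I * ((a:ℂ)/(δ:ℂ)) * x) =
      if a = 0 then (δ:ℂ) else 0 := by
  have hδ' : (0:ℝ) ≤ (δ:ℝ) := by positivity
  have hδ0 : (δ:ℂ) ≠ 0 := Nat.cast_ne_zero.mpr hδ.ne'
  rw [← intervalIntegral.integral_of_le hδ']
  rcases eq_or_ne a 0 with rfl | ha
  · simp
  · rw [if_neg ha]
    have hc : (2 * π * Complex.I * ((a:ℂ)/(δ:ℂ))) ≠ 0 := by
      apply mul_ne_zero (mul_ne_zero (by simp [Real.pi_ne_zero]) Complex.I_ne_zero)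
      exact div_ne_zero (Int.cast_ne_zero.mpr ha) hδ0
    rw [integral_exp_mul_complex hc]
    have h1 : (2 * π * Complex.I * ((a:ℂ)/(δ:ℂ))) * (δ:ℝ) = (a:ℂ) * (2 * π * Complex.I) := by
      push_cast; field_simp
    rw [h1, Complex.exp_int_mul_two_pi_mul_I]
    simp

lemma thetaF_pt {δ : ℕ} (hδ0 : (δ:ℂ) ≠ 0) (τ μ : ℂ) (m m' : ℤ) (x : ℝ) :
    thetaM2 τ δ m x μ * Complex.exp (-(2 * π * Complex.I * ((m':ℂ)/(δ:ℂ)) * x)) =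
      ∑' k, thetaF τ δ μ m m' k x := by
  rw [thetaM2, ← tsum_mul_right]
  refine tsum_congr fun k => ?_
  simp only [thetaF, thetaC, jacobiTheta₂_term, ← Complex.exp_add]
  congr 1
  push_cast
  field_simp
  ring

lemma thetaF_norm {δ : ℕ} (hδ : 0 < δ) (τ μ : ℂ) (m m' k : ℤ) (x : ℝ) :
    ‖thetaF τ δ μ m m' k x‖ = ‖thetaC τ δ μ m k‖ := by
  rw [thetaF, norm_mul]
  have h2 : (2 * π * Complex.I * (((k * δ + m - m' : ℤ) : ℂ)/(δ:ℂ)) * (x:ℂ)) =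
      Complex.I * ((2 * π * (((k * δ + m - m' : ℤ) : ℝ)/(δ:ℝ)) * x : ℝ) : ℂ) := by
    push_cast; ring
  rw [h2]
  have h3 : ‖Complex.exp (Complex.I *
      ((2 * π * (((k * δ + m - m' : ℤ) : ℝ)/(δ:ℝ)) * x : ℝ) : ℂ))‖ = 1 := by
    rw [Complex.norm_exp]
    simp [Complex.mul_re]
  rw [h3, mul_one]

lemma thetaC_summable {τ : ℂ} (hτ : 0 < τ.im) (δ : ℕ) (μ : ℂ) (m : ℤ) :
    Summable fun k : ℤ => ‖thetaC τ δ μ m k‖ := by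
  have h := (summable_jacobiTheta₂_term_iff (μ + τ * ((m:ℂ)/(δ:ℂ))) τ).mpr hτ
  have h2 : Summable fun k : ℤ => ‖jacobiTheta₂_term k (μ + τ * ((m:ℂ)/(δ:ℂ))) τ‖ :=
    summable_norm_iff.mpr h
  exact (h2.mul_right _).congr fun k => by rw [thetaC, norm_mul]

lemma thetaM2_integral {τ : ℂ} (hτ : 0 < τ.im) {δ : ℕ} (hδ : 0 < δ) (μ : ℂ)
    (m m' : ℤ) (hm0 : 0 ≤ m) (hm1 : m < δ) (hm'0 : 0 ≤ m') (hm'1 : m' < δ) :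
    ∫ x in Set.Ioc (0:ℝ) (δ:ℝ), thetaM2 τ δ m x μ *
      Complex.exp (-(2 * π * Complex.I * ((m':ℂ)/(δ:ℂ)) * x)) =
    if m = m' then (δ:ℂ) * Complex.exp (2 * π * Complex.I * ((m:ℂ)/(δ:ℂ)) * μ) else 0 := by
  have hδ0 : (δ:ℂ) ≠ 0 := Nat.cast_ne_zero.mpr hδ.ne'
  have hint : ∀ k : ℤ, IntegrableOn (thetaF τ δ μ m m' k) (Set.Ioc (0:ℝ) (δ:ℝ)) := by
    intro k
    have hcont : Continuous (thetaF τ δ μ m m' k) := by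
      unfold thetaF
      exact continuous_const.mul (Complex.continuous_exp.comp (by fun_prop))
    exact hcont.integrableOn_Ioc
  have hsum : Summable fun k : ℤ => ∫ x in Set.Ioc (0:ℝ) (δ:ℝ), ‖thetaF τ δ μ m m' k x‖ := by
    apply ((thetaC_summable hτ δ μ m).mul_left (δ:ℝ)).congr
    intro k
    simp only [thetaF_norm hδ]
    rw [setIntegral_const, Real.volume_real_Ioc_of_le (by positivity), smul_eq_mul]
    ring_nf
  have hinter := integral_tsum_of_summable_integral_norm hint hsum
  simp only [thetaF_pt hδ0]
  rw [← hinter]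
  have hInt : ∀ k : ℤ, (∫ x in Set.Ioc (0:ℝ) (δ:ℝ), thetaF τ δ μ m m' k x) =
      thetaC τ δ μ m k * (if (k * δ + m - m' : ℤ) = 0 then (δ:ℂ) else 0) := by
    intro k
    unfold thetaF
    rw [integral_const_mul, integral_exp_aux hδ]
  simp only [hInt]
  rw [tsum_eq_single 0]
  · rcases eq_or_ne m m' with rfl | hmm
    · simp [thetaC, jacobiTheta₂_term, mul_comm]
    · have h0 : (m - m' : ℤ) ≠ 0 := by omega
      simp [h0, hmm]
  · intro k hk
    have hq : (k * δ + m - m' : ℤ) ≠ 0 := by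
      rcases lt_or_gt_of_ne hk with h | h
      · have : k * (δ:ℤ) ≤ -δ := by nlinarith
        omega
      · have : (δ:ℤ) ≤ k * δ := by nlinarith
        omega
    simp [hq]

lemma thetaM2_term_eq {δ : ℕ} (hδ : (δ:ℂ) ≠ 0) (τ : ℂ) (m : ℤ) (z μ : ℂ) (k : ℤ) :
    Complex.exp (π * Complex.I * (k : ℂ) ^ 2 * τ) *
    Complex.exp (2 * π * Complex.I * τ * ((m : ℂ) / (δ : ℂ)) * (k : ℂ)) *
    Complex.exp (2 * π * Complex.I * (((k : ℂ) * (δ : ℂ) + (m : ℂ)) / (δ : ℂ)) * (z + μ)) =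
    jacobiTheta₂_term k (z + μ + τ * ((m : ℂ) / (δ : ℂ))) τ *
      Complex.exp (2 * π * Complex.I * ((m : ℂ) / (δ : ℂ)) * (z + μ)) := by
  rw [jacobiTheta₂_term, ← Complex.exp_add, ← Complex.exp_add, ← Complex.exp_add]
  congr 1
  field_simp
  ring

lemma thetaM2_eq {δ : ℕ} (hδ : (δ:ℂ) ≠ 0) (τ : ℂ) (m : ℤ) (z μ : ℂ) :
    thetaM2 τ δ m z μ =
      jacobiTheta₂ (z + μ + τ * ((m : ℂ) / (δ : ℂ))) τ *
        Complex.exp (2 * π * Complex.I * ((m : ℂ) / (δ : ℂ)) * (z + μ)) := by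
  rw [thetaM2, jacobiTheta₂, ← tsum_mul_right]
  exact tsum_congr fun k => thetaM2_term_eq hδ τ m z μ k

lemma continuous_thetaM2_real {τ : ℂ} (hτ : 0 < τ.im) {δ : ℕ} (hδ0 : (δ:ℂ) ≠ 0)
    (m : ℤ) (μ : ℂ) : Continuous fun x : ℝ => thetaM2 τ δ m x μ := by
  have h1 : Continuous fun x : ℝ => jacobiTheta₂ ((x:ℂ) + μ + τ * ((m:ℂ)/(δ:ℂ))) τ := by
    rw [continuous_iff_continuousAt]
    intro x
    have hc : ContinuousAt ((fun p : ℂ × ℂ => jacobiTheta₂ p.1 p.2) ∘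
        (fun y : ℝ => (((y:ℂ) + μ + τ * ((m:ℂ)/(δ:ℂ))), τ))) x :=
      ContinuousAt.comp (continuousAt_jacobiTheta₂ _ hτ) (by fun_prop)
    exact hc
  have h2 : (fun x : ℝ => thetaM2 τ δ m x μ) =
      fun x : ℝ => jacobiTheta₂ ((x:ℂ) + μ + τ * ((m:ℂ)/(δ:ℂ))) τ *
        Complex.exp (2 * π * Complex.I * ((m:ℂ)/(δ:ℂ)) * ((x:ℂ) + μ)) :=
    funext fun x => thetaM2_eq hδ0 τ m x μ
  rw [h2]
  exact h1.mul (Complex.continuous_exp.comp (by fun_prop))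

/-- For any `μ`, the functions `θ_m(·,μ)`, `m = 0,…,δ−1`, are linearly
independent over `ℂ` as functions on `ℂ`. -/
theorem thetaM2_linearIndependent (τ : ℂ) (hτ : 0 < τ.im) (δ : ℕ) (hδ : 1 ≤ δ)
    (μ : ℂ) :
    LinearIndependent ℂ (fun m : Fin δ => fun z : ℂ => thetaM2 τ δ (m : ℤ) z μ) := by
  have hδp : 0 < δ := hδ
  have hδ0 : (δ:ℂ) ≠ 0 := Nat.cast_ne_zero.mpr hδp.ne'
  rw [Fintype.linearIndependent_iff]
  intro g hg m'
  have hzero : ∀ x : ℝ, ∑ m : Fin δ, g m * thetaM2 τ δ (m:ℤ) x μ = 0 := by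
    intro x
    have := congrFun hg (x:ℂ)
    simpa using this
  have hintm : ∀ m : Fin δ, IntegrableOn
      (fun x : ℝ => g m * (thetaM2 τ δ (m:ℤ) x μ *
        Complex.exp (-(2 * π * Complex.I * (((m':ℤ):ℂ)/(δ:ℂ)) * x)))) (Set.Ioc (0:ℝ) (δ:ℝ)) := by
    intro m
    apply Continuous.integrableOn_Ioc
    exact continuous_const.mul ((continuous_thetaM2_real hτ hδ0 (m:ℤ) μ).mul
      (Complex.continuous_exp.comp (by fun_prop)))
  have key : ∀ m : Fin δ,
      (∫ x in Set.Ioc (0:ℝ) (δ:ℝ), thetaM2 τ δ (m:ℤ) x μ *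
        Complex.exp (-(2 * π * Complex.I * (((m':ℤ):ℂ)/(δ:ℂ)) * x))) =
      if (m:ℤ) = (m':ℤ) then (δ:ℂ) *
        Complex.exp (2 * π * Complex.I * (((m:ℤ):ℂ)/(δ:ℂ)) * μ) else 0 := fun m =>
    thetaM2_integral hτ hδp μ (m:ℤ) (m':ℤ) (by positivity) (by exact_mod_cast m.2)
      (by positivity) (by exact_mod_cast m'.2)
  have h0 : (0:ℂ) = ∑ m : Fin δ, g m *
      (if (m:ℤ) = (m':ℤ) then (δ:ℂ) *
        Complex.exp (2 * π * Complex.I * (((m:ℤ):ℂ)/(δ:ℂ)) * μ) else 0) := by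
    calc (0:ℂ) = ∫ x in Set.Ioc (0:ℝ) (δ:ℝ),
        (∑ m : Fin δ, g m * thetaM2 τ δ (m:ℤ) x μ) *
          Complex.exp (-(2 * π * Complex.I * (((m':ℤ):ℂ)/(δ:ℂ)) * x)) := by
          simp [hzero]
      _ = ∫ x in Set.Ioc (0:ℝ) (δ:ℝ), ∑ m : Fin δ, g m * (thetaM2 τ δ (m:ℤ) x μ *
            Complex.exp (-(2 * π * Complex.I * (((m':ℤ):ℂ)/(δ:ℂ)) * x))) := by
          congr 1
          funext x
          rw [Finset.sum_mul]
          exact Finset.sum_congr rfl fun m _ => by ring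
      _ = ∑ m : Fin δ, ∫ x in Set.Ioc (0:ℝ) (δ:ℝ), g m * (thetaM2 τ δ (m:ℤ) x μ *
            Complex.exp (-(2 * π * Complex.I * (((m':ℤ):ℂ)/(δ:ℂ)) * x))) :=
          integral_finset_sum _ fun m _ => hintm m
      _ = ∑ m : Fin δ, g m *
          (if (m:ℤ) = (m':ℤ) then (δ:ℂ) *
            Complex.exp (2 * π * Complex.I * (((m:ℤ):ℂ)/(δ:ℂ)) * μ) else 0) := by
          exact Finset.sum_congr rfl fun m _ => by rw [integral_const_mul, key m]
  rw [Finset.sum_eq_single m'] at h0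
  · rw [if_pos rfl] at h0
    have hne : (δ:ℂ) * Complex.exp (2 * π * Complex.I * (((m':ℤ):ℂ)/(δ:ℂ)) * μ) ≠ 0 :=
      mul_ne_zero hδ0 (Complex.exp_ne_zero _)
    have := h0.symm
    rcases mul_eq_zero.mp this with h | h
    · exact h
    · exact absurd h hne
  · intro m _ hm
    have : ¬ ((m:ℤ) = (m':ℤ)) := by
      simpa [Fin.ext_iff] using hm
    simp [this]
  · intro h
    exact absurd (Finset.mem_univ m') h
end

section
/- For every m ∈ {0,…,δ−1} and every μ ∈ ℂ, there exists z ∈ ℂ with θ_m(z,μ) ≠ 0; in fact ‖θ_m(·,μ)‖²_{L²} = √(τ₂/2)·δ·e^{2πm²τ₂/δ²} > 0, so θ_m(·,μ) is not identically zero. -/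
open Complex Real

open MeasureTheory Set

set_option maxHeartbeats 1000000


lemma aux_summable_exp_abs {b : ℝ} (hb : 0 < b) (c : ℝ) :
    Summable fun k : ℤ => Real.exp (-b * k ^ 2 + c * |(k : ℝ)|) := by
  have h := summable_pow_mul_jacobiTheta₂_term_bound (c / (2 * π)) (T := b / π)
    (by positivity) 0
  refine h.congr fun k => ?_
  rw [pow_zero, one_mul]
  congr 1
  have hπ := Real.pi_pos
  field_simp
  push_cast; ring

lemma aux_summable_exp {b : ℝ} (hb : 0 < b) (c d : ℝ) :
    Summable fun k : ℤ => Real.exp (-b * k ^ 2 + c * k + d) := by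
  refine ((aux_summable_exp_abs hb |c|).mul_right (Real.exp d)).of_nonneg_of_le
    (fun k => (Real.exp_pos _).le) (fun k => ?_)
  rw [← Real.exp_add]
  apply Real.exp_le_exp.mpr
  have h1 : c * (k : ℝ) ≤ |c| * |(k : ℝ)| := by
    calc c * (k : ℝ) ≤ |c * (k : ℝ)| := le_abs_self _
    _ = |c| * |(k : ℝ)| := abs_mul c k
  linarith

lemma aux_integral_tsum {E : Type*} [NormedAddCommGroup E] [NormedSpace ℝ E]
    {ι : Type*} [Countable ι] {f : ι → ℝ → E} {s : Set ℝ} (hs : MeasurableSet s)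
    (hvol : volume s ≠ ⊤) (hf : ∀ i, Continuous (f i)) {C : ι → ℝ}
    (hC : ∀ i, ∀ x ∈ s, ‖f i x‖ ≤ C i) (hC0 : ∀ i, 0 ≤ C i) (hCs : Summable C) :
    ∫ x in s, ∑' i, f i x = ∑' i, ∫ x in s, f i x := by
  refine integral_tsum (fun i => (hf i).aestronglyMeasurable) ?_
  have key : ∑' i, ∫⁻ x in s, ‖f i x‖₊ ∂volume ≤ ENNReal.ofReal (∑' i, C i) * volume s := by
    rw [ENNReal.ofReal_tsum_of_nonneg hC0 hCs, ← ENNReal.tsum_mul_right]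
    refine ENNReal.tsum_le_tsum fun i => ?_
    calc ∫⁻ x in s, ‖f i x‖₊ ∂volume
        ≤ ∫⁻ _x in s, ENNReal.ofReal (C i) ∂volume := by
          refine setLIntegral_mono measurable_const fun x hx => ?_
          rw [← ENNReal.ofReal_coe_nnreal, coe_nnnorm]
          exact ENNReal.ofReal_le_ofReal (hC i x hx)
      _ = ENNReal.ofReal (C i) * volume s := setLIntegral_const s _
  exact ne_top_of_le_ne_top (ENNReal.mul_ne_top ENNReal.ofReal_ne_top hvol) key

lemma aux_iUnion {t : ℝ} (ht : 0 < t) (c : ℝ) :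
    (⋃ k : ℤ, Set.Ioc (c + t * k) (c + t * (k + 1))) = Set.univ := by
  ext x
  simp only [Set.mem_iUnion, Set.mem_Ioc, Set.mem_univ, iff_true]
  refine ⟨⌈(x - c) / t⌉ - 1, ?_, ?_⟩
  · push_cast
    have h1 : ((⌈(x - c) / t⌉ : ℝ) - 1) < (x - c) / t := by
      have := Int.ceil_lt_add_one ((x - c) / t); linarith
    have h2 := (mul_lt_mul_iff_right₀ ht).mpr h1
    rw [mul_div_cancel₀ _ ht.ne'] at h2
    linarith
  · push_cast
    have h1 : (x - c) / t ≤ (⌈(x - c) / t⌉ : ℝ) := Int.le_ceil _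
    have h2 := (mul_le_mul_iff_right₀ ht).mpr h1
    rw [mul_div_cancel₀ _ ht.ne'] at h2
    have h3 : ((⌈(x - c) / t⌉ : ℝ) - 1 + 1) = (⌈(x - c) / t⌉ : ℝ) := by ring
    rw [h3]
    linarith

lemma aux_disjoint {t : ℝ} (ht : 0 < t) (c : ℝ) :
    Pairwise (Function.onFun Disjoint fun k : ℤ => Set.Ioc (c + t * k) (c + t * (k + 1))) := by
  intro k j hkj
  rw [Function.onFun, Set.Ioc_disjoint_Ioc]
  rcases (Ne.lt_or_gt hkj) with h | h
  · have h' : (k : ℝ) + 1 ≤ (j : ℝ) := by exact_mod_cast h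
    refine le_trans (min_le_left _ _) (le_trans ?_ (le_max_right _ _))
    nlinarith
  · have h' : (j : ℝ) + 1 ≤ (k : ℝ) := by exact_mod_cast h
    refine le_trans (min_le_right _ _) (le_trans ?_ (le_max_left _ _))
    nlinarith

lemma aux_gauss_sum {t : ℝ} (ht : 0 < t) (c : ℝ) :
    ∑' k : ℤ, ∫ x in Set.Ioc (c + t * k) (c + t * (k + 1)), Real.exp (-(2 * π / t) * x ^ 2) =
      Real.sqrt (t / 2) := by
  have hb : 0 < 2 * π / t := by positivity
  have hint := integrable_exp_neg_mul_sq hb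
  have h := hasSum_integral_iUnion (μ := volume)
    (f := fun x : ℝ => Real.exp (-(2 * π / t) * x ^ 2))
    (fun k : ℤ => measurableSet_Ioc) (aux_disjoint ht c)
    (by rw [aux_iUnion ht c]; exact hint.integrableOn)
  rw [aux_iUnion ht c, setIntegral_univ, integral_gaussian] at h
  rw [h.tsum_eq]
  congr 1
  have := Real.pi_pos
  field_simp

lemma aux_integral_cexp (δ : ℕ) (n : ℤ) :
    (∫ x in (0:ℝ)..(δ:ℝ), Complex.exp (2 * π * Complex.I * n * x)) =
      if n = 0 then (δ : ℂ) else 0 := by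
  split_ifs with h
  · simp [h]
  · have hc : (2 * (π : ℂ) * Complex.I * (n : ℂ)) ≠ 0 := by
      simp [Real.pi_ne_zero, Complex.I_ne_zero, h]
    rw [integral_exp_mul_complex hc]
    have h1 : Complex.exp (2 * (π : ℂ) * Complex.I * (n : ℂ) * (δ : ℝ)) = 1 := by
      rw [show (2 * (π : ℂ) * Complex.I * (n : ℂ) * ((δ : ℝ) : ℂ)) =
          ((n * δ : ℤ) : ℂ) * (2 * π * Complex.I) by push_cast; ring]
      exact Complex.exp_int_mul_two_pi_mul_I _
    rw [h1, Complex.ofReal_zero, mul_zero, Complex.exp_zero, sub_self, zero_div]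

lemma aux_inner (τ : ℂ) (hτ : 0 < τ.im) (δ : ℕ) (hδ : 1 ≤ δ) (m : ℤ) (μ : ℂ) (z₂ : ℝ) :
    (∫ z₁ in (0:ℝ)..(δ:ℝ), ‖thetaM2 τ δ m (z₁ + z₂ * Complex.I) μ‖ ^ 2) =
      (δ : ℝ) * ∑' k : ℤ, Real.exp (-π * τ.im * k ^ 2 - 2 * π * ((m:ℝ)/δ) * τ.im * k
        - 2 * π * ((k:ℝ) + (m:ℝ)/δ) * (z₂ + μ.im)) ^ 2 := by
  have hδR : (0:ℝ) < δ := by exact_mod_cast hδ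
  have hδC : (δ:ℂ) ≠ 0 := Nat.cast_ne_zero.mpr (by omega)
  set t := τ.im with ht_def
  set rr : ℝ := (m:ℝ)/δ with hrr_def
  set Qa : ℤ → ℂ := fun k => π * Complex.I * (k:ℂ)^2 * τ + 2 * π * Complex.I * ((rr:ℝ):ℂ) * τ * k
    + 2 * π * Complex.I * ((k:ℂ) + ((rr:ℝ):ℂ)) * ((z₂:ℂ) * Complex.I + μ) with hQa_def
  set A : ℤ → ℝ := fun k => Real.exp ((Qa k).re) with hA_def
  have hQre : ∀ k : ℤ, (Qa k).re = -π*t*k^2 - 2*π*rr*t*k - 2*π*((k:ℝ)+rr)*(z₂+μ.im) := by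
    intro k
    simp only [hQa_def, Complex.add_re, Complex.mul_re, Complex.mul_im, Complex.I_re,
      Complex.I_im, Complex.ofReal_re, Complex.ofReal_im, Complex.intCast_re, Complex.intCast_im,
      Complex.add_im, Complex.re_ofNat, Complex.im_ofNat, pow_two]
    ring
  have hsumA : Summable A := by
    have h := aux_summable_exp (b := π*t) (by positivity)
      (-2*π*rr*t - 2*π*(z₂+μ.im)) (-2*π*rr*(z₂+μ.im))
    refine h.congr fun k => ?_
    simp only [hA_def]
    congr 1
    rw [hQre k]; ring
  have hfnorm : ∀ (k : ℤ) (z₁ : ℝ),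
      ‖Complex.exp (Qa k + 2 * π * Complex.I * k * z₁)‖ = A k := by
    intro k z₁
    rw [Complex.norm_exp]
    congr 1
    rw [Complex.add_re, show (2*(π:ℂ) * Complex.I * (k:ℂ) * (z₁:ℂ))
      = ((2*π*k*z₁ : ℝ):ℂ) * Complex.I from by push_cast; ring]
    simp
  have hθ : ∀ z₁ : ℝ, thetaM2 τ δ m (z₁ + z₂ * Complex.I) μ =
      (∑' k : ℤ, Complex.exp (Qa k + 2 * π * Complex.I * k * z₁)) *
        Complex.exp (2 * π * Complex.I * ((rr:ℝ):ℂ) * z₁) := by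
    intro z₁
    simp only [thetaM2]
    rw [← tsum_mul_right]
    apply tsum_congr; intro k
    rw [← Complex.exp_add, ← Complex.exp_add, ← Complex.exp_add]
    congr 1
    have hcast : ((rr:ℝ):ℂ) = (m:ℂ)/(δ:ℂ) := by rw [hrr_def]; push_cast; ring
    rw [hQa_def, hcast]
    field_simp
    ring
  have habs : ∀ z₁ : ℝ, ‖thetaM2 τ δ m (z₁ + z₂ * Complex.I) μ‖ ^ 2 =
      ‖∑' k : ℤ, Complex.exp (Qa k + 2 * π * Complex.I * k * z₁)‖ ^ 2 := by
    intro z₁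
    rw [hθ z₁, norm_mul, show (2*(π:ℂ) * Complex.I * ((rr:ℝ):ℂ) * (z₁:ℂ))
      = ((2*π*rr*z₁ : ℝ):ℂ) * Complex.I from by push_cast; ring,
      Complex.norm_exp_ofReal_mul_I, mul_one]
  -- the doubly-indexed product family
  set F : ℤ × ℤ → ℝ → ℂ := fun p z₁ =>
    Complex.exp (Qa p.1 + 2 * π * Complex.I * p.1 * z₁) *
      (starRingEnd ℂ) (Complex.exp (Qa p.2 + 2 * π * Complex.I * p.2 * z₁)) with hF_def
  have hn : ∀ z₁ : ℝ, Summable fun k : ℤ => ‖Complex.exp (Qa k + 2 * π * Complex.I * k * z₁)‖ := by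
    intro z₁; simp_rw [hfnorm]; exact hsumA
  have hn' : ∀ z₁ : ℝ, Summable fun k : ℤ =>
      ‖(starRingEnd ℂ) (Complex.exp (Qa k + 2 * π * Complex.I * k * z₁))‖ := by
    intro z₁; simp_rw [RCLike.norm_conj]; exact hn z₁
  have hsq : ∀ z₁ : ℝ, ‖∑' k : ℤ, Complex.exp (Qa k + 2 * π * Complex.I * k * z₁)‖ ^ 2
      = ∑' p : ℤ × ℤ, (F p z₁).re := by
    intro z₁
    have hconj : (starRingEnd ℂ) (∑' k : ℤ, Complex.exp (Qa k + 2 * π * Complex.I * k * z₁)) =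
        ∑' k : ℤ, (starRingEnd ℂ) (Complex.exp (Qa k + 2 * π * Complex.I * k * z₁)) := by
      exact tsum_star
    have h1 : ((Complex.normSq (∑' k : ℤ, Complex.exp (Qa k + 2 * π * Complex.I * k * z₁)) : ℝ) : ℂ)
        = ∑' p : ℤ × ℤ, F p z₁ := by
      simp only [hF_def]
      rw [← Complex.mul_conj, hconj,
        tsum_mul_tsum_of_summable_norm (f := fun k : ℤ => Complex.exp (Qa k + 2 * π * Complex.I * k * z₁)) (g := fun k : ℤ => (starRingEnd ℂ) (Complex.exp (Qa k + 2 * π * Complex.I * k * z₁))) (hn z₁) (hn' z₁)]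
    calc ‖∑' k : ℤ, Complex.exp (Qa k + 2 * π * Complex.I * k * z₁)‖ ^ 2
        = Complex.normSq (∑' k : ℤ, Complex.exp (Qa k + 2 * π * Complex.I * k * z₁)) :=
          Complex.sq_norm _
      _ = ((Complex.normSq (∑' k : ℤ, Complex.exp (Qa k + 2 * π * Complex.I * k * z₁)) : ℝ) : ℂ).re
          := (Complex.ofReal_re _).symm
      _ = (∑' p : ℤ × ℤ, F p z₁).re := by rw [h1]
      _ = ∑' p : ℤ × ℤ, (F p z₁).re := by
          have hs2 : Summable fun p : ℤ × ℤ => F p z₁ := by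
            simp only [hF_def]
            exact summable_mul_of_summable_norm (f := fun k : ℤ => Complex.exp (Qa k + 2 * π * Complex.I * k * z₁)) (g := fun k : ℤ => (starRingEnd ℂ) (Complex.exp (Qa k + 2 * π * Complex.I * k * z₁))) (hn z₁) (hn' z₁)
          exact Complex.re_tsum hs2
  have hFcont : ∀ p : ℤ × ℤ, Continuous fun z₁ : ℝ => F p z₁ := by
    intro p
    apply Continuous.mul
    · exact Complex.continuous_exp.comp (by continuity)
    · exact Complex.continuous_conj.comp (Complex.continuous_exp.comp (by continuity))
  have hFnorm : ∀ (p : ℤ × ℤ) (z₁ : ℝ), ‖F p z₁‖ = A p.1 * A p.2 := by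
    intro p z₁
    simp only [hF_def, norm_mul, RCLike.norm_conj, hfnorm]
  have hCs : Summable fun p : ℤ × ℤ => A p.1 * A p.2 :=
    hsumA.mul_of_nonneg hsumA (fun k => (Real.exp_pos _).le) (fun k => (Real.exp_pos _).le)
  -- swap integral and sum
  have step1 : (∫ z₁ in (0:ℝ)..(δ:ℝ), ‖thetaM2 τ δ m (z₁ + z₂ * Complex.I) μ‖ ^ 2)
      = ∑' p : ℤ × ℤ, ∫ z₁ in Set.Ioc (0:ℝ) (δ:ℝ), (F p z₁).re := by
    rw [intervalIntegral.integral_of_le hδR.le]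
    rw [show (fun z₁ : ℝ => ‖thetaM2 τ δ m (z₁ + z₂ * Complex.I) μ‖ ^ 2)
      = fun z₁ : ℝ => ∑' p : ℤ × ℤ, (F p z₁).re from funext fun z₁ => by rw [habs z₁, hsq z₁]]
    refine aux_integral_tsum measurableSet_Ioc (by simp) ?_ (C := fun p => A p.1 * A p.2) ?_ ?_ hCs
    · exact fun p => Complex.continuous_re.comp (hFcont p)
    · intro p x _
      calc ‖(F p x).re‖ = |(F p x).re| := Real.norm_eq_abs _
        _ ≤ ‖F p x‖ := Complex.abs_re_le_norm _
        _ = A p.1 * A p.2 := by rw [hFnorm]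
    · exact fun p => mul_nonneg (Real.exp_pos _).le (Real.exp_pos _).le
  -- compute each integral
  have hFint : ∀ p : ℤ × ℤ, (∫ z₁ in Set.Ioc (0:ℝ) (δ:ℝ), (F p z₁).re)
      = (if p.1 = p.2 then (δ:ℝ) * (A p.1) ^ 2 else 0) := by
    intro p
    obtain ⟨k, j⟩ := p
    have hconj2 : ∀ z₁ : ℝ, (starRingEnd ℂ) (2 * π * Complex.I * (j:ℂ) * (z₁:ℂ))
        = -(2 * π * Complex.I * (j:ℂ) * (z₁:ℂ)) := by
      intro z₁
      rw [show (2*(π:ℂ) * Complex.I * (j:ℂ) * (z₁:ℂ))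
        = ((2*π*j*z₁ : ℝ):ℂ) * Complex.I from by push_cast; ring]
      rw [map_mul, Complex.conj_ofReal, Complex.conj_I]
      ring
    have hF2 : ∀ z₁ : ℝ, F (k, j) z₁ =
        Complex.exp (Qa k + (starRingEnd ℂ) (Qa j)) *
          Complex.exp (2 * π * Complex.I * ((k - j : ℤ):ℂ) * (z₁:ℂ)) := by
      intro z₁
      simp only [hF_def]
      rw [← Complex.exp_conj, map_add, hconj2, ← Complex.exp_add, ← Complex.exp_add]
      congr 1
      push_cast
      ring
    have hI : (∫ z₁ in Set.Ioc (0:ℝ) (δ:ℝ), F (k, j) z₁)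
        = Complex.exp (Qa k + (starRingEnd ℂ) (Qa j)) * (if (k - j : ℤ) = 0 then (δ:ℂ) else 0) := by
      rw [← intervalIntegral.integral_of_le hδR.le]
      rw [intervalIntegral.integral_congr (g := fun z₁ : ℝ =>
        Complex.exp (Qa k + (starRingEnd ℂ) (Qa j)) *
          Complex.exp (2 * π * Complex.I * ((k - j : ℤ):ℂ) * (z₁:ℂ)))
        (fun z₁ _ => hF2 z₁)]
      rw [intervalIntegral.integral_const_mul, aux_integral_cexp δ (k - j)]
    have hre : (∫ z₁ in Set.Ioc (0:ℝ) (δ:ℝ), (F (k, j) z₁).re)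
        = (∫ z₁ in Set.Ioc (0:ℝ) (δ:ℝ), F (k, j) z₁).re := by
      have hint : IntegrableOn (fun z₁ : ℝ => F (k, j) z₁) (Set.Ioc (0:ℝ) (δ:ℝ)) volume :=
        (hFcont (k, j)).integrableOn_Ioc
      exact integral_re hint
    rw [hre, hI]
    by_cases hkj : k = j
    · subst hkj
      simp only [sub_self, if_pos rfl, if_true]
      rw [Complex.add_conj, ← Complex.ofReal_exp, ← Complex.ofReal_natCast δ,
        ← Complex.ofReal_mul, Complex.ofReal_re, hA_def]
      simp only
      rw [two_mul, Real.exp_add, sq]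
      ring
    · rw [if_neg (sub_ne_zero.mpr hkj), if_neg hkj, mul_zero, Complex.zero_re]
  -- collapse the double sum to the diagonal
  have hdiag : ∑' p : ℤ × ℤ, (if p.1 = p.2 then (δ:ℝ) * (A p.1) ^ 2 else 0)
      = ∑' k : ℤ, (δ:ℝ) * (A k) ^ 2 := by
    have hinj : Function.Injective (fun k : ℤ => ((k, k) : ℤ × ℤ)) := by
      intro a b h; exact congrArg Prod.fst h
    have hsupp : Function.support (fun p : ℤ × ℤ => (if p.1 = p.2 then (δ:ℝ) * (A p.1) ^ 2 else 0))
        ⊆ Set.range (fun k : ℤ => ((k, k) : ℤ × ℤ)) := by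
      intro p hp
      simp only [Function.mem_support] at hp
      by_cases h : p.1 = p.2
      · exact ⟨p.1, by rw [Prod.ext_iff]; exact ⟨rfl, h⟩⟩
      · exact absurd (if_neg h) hp
    rw [← Function.Injective.tsum_eq hinj hsupp]
    simp
  rw [step1]
  rw [tsum_congr hFint, hdiag, tsum_mul_left]
  congr 1
  apply tsum_congr
  intro k
  rw [hA_def]
  simp only
  rw [hQre k]

lemma aux_outer {t : ℝ} (ht : 0 < t) (c : ℝ) :
    (∫ z₂ in Set.Ioc (0:ℝ) t, ∑' k : ℤ, Real.exp (-(2 * π / t) * (z₂ + (c + t * k)) ^ 2))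
      = Real.sqrt (t / 2) := by
  have hswap : (∫ z₂ in Set.Ioc (0:ℝ) t, ∑' k : ℤ, Real.exp (-(2 * π / t) * (z₂ + (c + t * k)) ^ 2))
      = ∑' k : ℤ, ∫ z₂ in Set.Ioc (0:ℝ) t, Real.exp (-(2 * π / t) * (z₂ + (c + t * k)) ^ 2) := by
    refine aux_integral_tsum measurableSet_Ioc (by simp) (fun k => by fun_prop)
      (C := fun k : ℤ => Real.exp (-(2 * π * t) * k ^ 2 + (4 * π * (t + |c|)) * |(k : ℝ)|))
      ?_ (fun k => (Real.exp_pos _).le)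
      (aux_summable_exp_abs (by positivity) _)
    intro k z₂ hz₂
    rw [Real.norm_eq_abs, abs_of_pos (Real.exp_pos _)]
    apply Real.exp_le_exp.mpr
    have habs : |z₂ + c| ≤ t + |c| := by
      refine (abs_add_le _ _).trans ?_
      have : |z₂| ≤ t := by rw [abs_of_pos hz₂.1]; exact hz₂.2
      linarith
    have h3 : -(t * |(k:ℝ)| * (t + |c|)) ≤ t * (k:ℝ) * (z₂ + c) := by
      have h1 := neg_abs_le (t * (k:ℝ) * (z₂ + c))
      have h2 : |t * (k:ℝ) * (z₂ + c)| = t * |(k:ℝ)| * |z₂ + c| := by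
        rw [abs_mul, abs_mul, abs_of_pos ht]
      rw [h2] at h1
      have h2b := mul_le_mul_of_nonneg_left habs (by positivity : (0:ℝ) ≤ t * |(k:ℝ)|)
      nlinarith
    have h2 : t^2 * (k:ℝ)^2 - 2 * t * (t + |c|) * |(k:ℝ)| ≤ (z₂ + (c + t * k))^2 := by
      nlinarith [sq_nonneg (z₂ + c)]
    have hb : (0:ℝ) < 2 * π / t := by positivity
    have h4 := mul_le_mul_of_nonneg_left h2 hb.le
    have h5 : (2 * π / t) * (t^2 * (k:ℝ)^2 - 2 * t * (t + |c|) * |(k:ℝ)|)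
        = -(-(2 * π * t) * (k:ℝ)^2 + (4 * π * (t + |c|)) * |(k:ℝ)|) := by
      field_simp
      ring
    nlinarith [h4, h5]
  rw [hswap]
  rw [show (fun k : ℤ => ∫ z₂ in Set.Ioc (0:ℝ) t, Real.exp (-(2 * π / t) * (z₂ + (c + t * k)) ^ 2))
      = fun k : ℤ => ∫ x in Set.Ioc (c + t * k) (c + t * (k + 1)),
        Real.exp (-(2 * π / t) * x ^ 2) from funext fun k => ?_, aux_gauss_sum ht c]
  rw [← intervalIntegral.integral_of_le ht.le,
    intervalIntegral.integral_comp_add_right (fun x => Real.exp (-(2 * π / t) * x ^ 2)) (c + t * k),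
    show (0:ℝ) + (c + t * k) = c + t * k from by ring,
    show t + (c + t * k) = c + t * (k + 1) from by ring,
    intervalIntegral.integral_of_le (by nlinarith : c + t * (k:ℝ) ≤ c + t * ((k:ℝ) + 1))]

/-- `θ_m(·,μ)` is not identically zero: its squared weighted `L²` norm equals
`√(τ₂/2)·δ·e^{2πm²τ₂/δ²} > 0`, and there exists `z` with `θ_m(z,μ) ≠ 0`. -/
theorem thetaM2_nonzero (τ : ℂ) (hτ : 0 < τ.im) (δ : ℕ) (hδ : 1 ≤ δ)
    (m : ℤ) (hm0 : 0 ≤ m) (hm : m ≤ (δ : ℤ) - 1) (μ : ℂ) :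
    ((∫ z₂ in (0:ℝ)..τ.im, ∫ z₁ in (0:ℝ)..(δ:ℝ),
        Real.exp (-2 * π * (z₂ + μ.im) ^ 2 / τ.im) *
          ‖thetaM2 τ δ m (z₁ + z₂ * Complex.I) μ‖ ^ 2) =
        Real.sqrt (τ.im / 2) * δ * Real.exp (2 * π * (m : ℝ) ^ 2 * τ.im / (δ : ℝ) ^ 2)) ∧
    (0 < Real.sqrt (τ.im / 2) * δ * Real.exp (2 * π * (m : ℝ) ^ 2 * τ.im / (δ : ℝ) ^ 2)) ∧
    ∃ z : ℂ, thetaM2 τ δ m z μ ≠ 0 := by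
  have hδR : (0:ℝ) < δ := by exact_mod_cast hδ
  have hτ0 : τ.im ≠ 0 := hτ.ne'
  have hpos : 0 < Real.sqrt (τ.im / 2) * δ *
      Real.exp (2 * π * (m : ℝ) ^ 2 * τ.im / (δ : ℝ) ^ 2) := by
    have h1 : 0 < Real.sqrt (τ.im / 2) := Real.sqrt_pos.mpr (by linarith)
    have h2 := Real.exp_pos (2 * π * (m : ℝ) ^ 2 * τ.im / (δ : ℝ) ^ 2)
    positivity
  have key : (∫ z₂ in (0:ℝ)..τ.im, ∫ z₁ in (0:ℝ)..(δ:ℝ),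
      Real.exp (-2 * π * (z₂ + μ.im) ^ 2 / τ.im) *
        ‖thetaM2 τ δ m (z₁ + z₂ * Complex.I) μ‖ ^ 2) =
      Real.sqrt (τ.im / 2) * δ * Real.exp (2 * π * (m : ℝ) ^ 2 * τ.im / (δ : ℝ) ^ 2) := by
    have hstep : ∀ z₂ : ℝ, (∫ z₁ in (0:ℝ)..(δ:ℝ),
        Real.exp (-2 * π * (z₂ + μ.im) ^ 2 / τ.im) *
          ‖thetaM2 τ δ m (z₁ + z₂ * Complex.I) μ‖ ^ 2)
        = ((δ:ℝ) * Real.exp (2 * π * τ.im * ((m:ℝ)/(δ:ℝ))^2)) *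
          ∑' k : ℤ, Real.exp (-(2 * π / τ.im) *
            (z₂ + (μ.im + τ.im * ((m:ℝ)/(δ:ℝ)) + τ.im * (k:ℝ)))^2) := by
      intro z₂
      rw [intervalIntegral.integral_const_mul, aux_inner τ hτ δ hδ m μ z₂]
      have hterm : ∀ k : ℤ,
          Real.exp (-2 * π * (z₂ + μ.im) ^ 2 / τ.im) * ((δ:ℝ) *
            Real.exp (-π * τ.im * k ^ 2 - 2 * π * ((m:ℝ)/δ) * τ.im * k
              - 2 * π * ((k:ℝ) + (m:ℝ)/δ) * (z₂ + μ.im)) ^ 2)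
          = ((δ:ℝ) * Real.exp (2 * π * τ.im * ((m:ℝ)/(δ:ℝ))^2)) *
            Real.exp (-(2 * π / τ.im) *
              (z₂ + (μ.im + τ.im * ((m:ℝ)/(δ:ℝ)) + τ.im * (k:ℝ)))^2) := by
        intro k
        have harg : (-2 * π * (z₂ + μ.im) ^ 2 / τ.im) +
            ((-π * τ.im * k ^ 2 - 2 * π * ((m:ℝ)/δ) * τ.im * k
              - 2 * π * ((k:ℝ) + (m:ℝ)/δ) * (z₂ + μ.im)) +
             (-π * τ.im * k ^ 2 - 2 * π * ((m:ℝ)/δ) * τ.im * k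
              - 2 * π * ((k:ℝ) + (m:ℝ)/δ) * (z₂ + μ.im)))
            = (2 * π * τ.im * ((m:ℝ)/(δ:ℝ))^2) +
              (-(2 * π / τ.im) *
                (z₂ + (μ.im + τ.im * ((m:ℝ)/(δ:ℝ)) + τ.im * (k:ℝ)))^2) := by
          field_simp
          ring
        have e1 : Real.exp (-2 * π * (z₂ + μ.im) ^ 2 / τ.im) * ((δ:ℝ) *
            Real.exp (-π * τ.im * k ^ 2 - 2 * π * ((m:ℝ)/δ) * τ.im * k
              - 2 * π * ((k:ℝ) + (m:ℝ)/δ) * (z₂ + μ.im)) ^ 2)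
            = (δ:ℝ) * Real.exp ((-2 * π * (z₂ + μ.im) ^ 2 / τ.im) +
              ((-π * τ.im * k ^ 2 - 2 * π * ((m:ℝ)/δ) * τ.im * k
              - 2 * π * ((k:ℝ) + (m:ℝ)/δ) * (z₂ + μ.im)) +
               (-π * τ.im * k ^ 2 - 2 * π * ((m:ℝ)/δ) * τ.im * k
              - 2 * π * ((k:ℝ) + (m:ℝ)/δ) * (z₂ + μ.im)))) := by
          rw [Real.exp_add, Real.exp_add]
          ring
        rw [e1, harg, Real.exp_add]
        ring
      rw [show ((δ:ℝ) * Real.exp (2 * π * τ.im * ((m:ℝ)/(δ:ℝ))^2)) *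
          ∑' k : ℤ, Real.exp (-(2 * π / τ.im) *
            (z₂ + (μ.im + τ.im * ((m:ℝ)/(δ:ℝ)) + τ.im * (k:ℝ)))^2)
        = ∑' k : ℤ, ((δ:ℝ) * Real.exp (2 * π * τ.im * ((m:ℝ)/(δ:ℝ))^2)) *
            Real.exp (-(2 * π / τ.im) *
              (z₂ + (μ.im + τ.im * ((m:ℝ)/(δ:ℝ)) + τ.im * (k:ℝ)))^2) from tsum_mul_left.symm]
      rw [show ((δ:ℝ) * ∑' k : ℤ, Real.exp (-π * τ.im * k ^ 2 - 2 * π * ((m:ℝ)/δ) * τ.im * k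
            - 2 * π * ((k:ℝ) + (m:ℝ)/δ) * (z₂ + μ.im)) ^ 2)
        = ∑' k : ℤ, (δ:ℝ) * Real.exp (-π * τ.im * k ^ 2 - 2 * π * ((m:ℝ)/δ) * τ.im * k
            - 2 * π * ((k:ℝ) + (m:ℝ)/δ) * (z₂ + μ.im)) ^ 2 from tsum_mul_left.symm]
      rw [show Real.exp (-2 * π * (z₂ + μ.im) ^ 2 / τ.im) *
          ∑' k : ℤ, (δ:ℝ) * Real.exp (-π * τ.im * k ^ 2 - 2 * π * ((m:ℝ)/δ) * τ.im * k
            - 2 * π * ((k:ℝ) + (m:ℝ)/δ) * (z₂ + μ.im)) ^ 2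
        = ∑' k : ℤ, Real.exp (-2 * π * (z₂ + μ.im) ^ 2 / τ.im) *
            ((δ:ℝ) * Real.exp (-π * τ.im * k ^ 2 - 2 * π * ((m:ℝ)/δ) * τ.im * k
              - 2 * π * ((k:ℝ) + (m:ℝ)/δ) * (z₂ + μ.im)) ^ 2) from tsum_mul_left.symm]
      exact tsum_congr hterm
    rw [intervalIntegral.integral_congr (g := fun z₂ : ℝ =>
      ((δ:ℝ) * Real.exp (2 * π * τ.im * ((m:ℝ)/(δ:ℝ))^2)) *
        ∑' k : ℤ, Real.exp (-(2 * π / τ.im) *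
          (z₂ + (μ.im + τ.im * ((m:ℝ)/(δ:ℝ)) + τ.im * (k:ℝ)))^2)) (fun z₂ _ => hstep z₂)]
    rw [intervalIntegral.integral_const_mul, intervalIntegral.integral_of_le hτ.le,
      aux_outer hτ (μ.im + τ.im * ((m:ℝ)/(δ:ℝ)))]
    rw [show Real.exp (2 * π * τ.im * ((m:ℝ)/(δ:ℝ))^2)
      = Real.exp (2 * π * (m:ℝ)^2 * τ.im / (δ:ℝ)^2) from by congr 1; field_simp]
    ring
  refine ⟨key, hpos, ?_⟩
  by_contra hz
  push_neg at hz
  have h0 : (∫ z₂ in (0:ℝ)..τ.im, ∫ z₁ in (0:ℝ)..(δ:ℝ),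
      Real.exp (-2 * π * (z₂ + μ.im) ^ 2 / τ.im) *
        ‖thetaM2 τ δ m (z₁ + z₂ * Complex.I) μ‖ ^ 2) = 0 := by
    simp [hz]
  rw [key] at h0
  linarith
end
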